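/- The measurable subsets form a Boolean ring on which the measure is additive: if A, B ⊆ X are measurable, then A ∪ B, A ∩ B and A \ B are measurable; and if in addition A and B are disjoint, then μ(A ∪ B) = μ(A) + μ(B). -/

import Mathlib

open Filter Topology

/-- A series `Σ_{i∈ℕ} x i` converges to `s` if its partial sums `Σ_{i=0}^{N} x i`
converge to `s` as `N → ∞`. -/
def SeriesConvTo {G : Type*} [AddCommMonoid G] [TopologicalSpace G]
    (x : ℕ → G) (s : G) : Prop :=
  Tendsto (fun N => ∑ i ∈ Finset.range (N + 1), x i) atTop (𝓝 s)

/-- `A ⊆ X` is measurable (w.r.t. the collection `S` of stable sets and the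
additive measure `μ`) if for every `m` there are a stable set `Am m` and a
sequence of stable sets `C m i` with `Σ_i μ (C m i)` convergent (to `s m`),
`A △ Am m ⊆ ⋃ i, C m i`, and `s m → 0` as `m → ∞`. -/
def RMeasurable {G : Type*} [AddCommMonoid G] [TopologicalSpace G] {X : Type*}
    (S : Set (Set X)) (μ : Set X → G) (A : Set X) : Prop :=
  ∃ (Am : ℕ → Set X) (C : ℕ → ℕ → Set X) (s : ℕ → G),
    (∀ m, Am m ∈ S) ∧ (∀ m i, C m i ∈ S) ∧
    (∀ m, SeriesConvTo (fun i => μ (C m i)) (s m)) ∧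
    (∀ m, symmDiff A (Am m) ⊆ ⋃ i, C m i) ∧
    Tendsto s atTop (𝓝 0)

/-- `A ⊆ X` is measurable with measure value `L`, i.e. measurable with witnesses
`Am` such that `μ (Am m) → L`. -/
def RMeasureVal {G : Type*} [AddCommMonoid G] [TopologicalSpace G] {X : Type*}
    (S : Set (Set X)) (μ : Set X → G) (A : Set X) (L : G) : Prop :=
  ∃ (Am : ℕ → Set X) (C : ℕ → ℕ → Set X) (s : ℕ → G),
    (∀ m, Am m ∈ S) ∧ (∀ m i, C m i ∈ S) ∧
    (∀ m, SeriesConvTo (fun i => μ (C m i)) (s m)) ∧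
    (∀ m, symmDiff A (Am m) ⊆ ⋃ i, C m i) ∧
    Tendsto s atTop (𝓝 0) ∧
    Tendsto (fun m => μ (Am m)) atTop (𝓝 L)

namespace MBRaux

def il {α : Type*} (a b : ℕ → α) (n : ℕ) : α := if Even n then a (n / 2) else b (n / 2)

lemma il_even {α : Type*} (a b : ℕ → α) (i : ℕ) : il a b (2 * i) = a i := by
  unfold il
  rw [if_pos ⟨i, by ring⟩]
  congr 1
  omega

lemma il_odd {α : Type*} (a b : ℕ → α) (i : ℕ) : il a b (2 * i + 1) = b i := by
  unfold il
  rw [if_neg (by rw [Nat.even_iff]; omega)]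
  congr 1
  omega

lemma il_mem {X : Type*} (a b : ℕ → Set X) (S : Set (Set X))
    (ha : ∀ i, a i ∈ S) (hb : ∀ i, b i ∈ S) : ∀ i, il a b i ∈ S := by
  intro i
  unfold il
  split
  · exact ha _
  · exact hb _

lemma il_iUnion {X : Type*} (a b : ℕ → Set X) :
    ((⋃ i, a i) ∪ ⋃ i, b i) ⊆ ⋃ i, il a b i := by
  rintro x (hx | hx)
  · obtain ⟨i, hi⟩ := Set.mem_iUnion.mp hx
    exact Set.mem_iUnion.mpr ⟨2 * i, by rw [il_even]; exact hi⟩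
  · obtain ⟨i, hi⟩ := Set.mem_iUnion.mp hx
    exact Set.mem_iUnion.mpr ⟨2 * i + 1, by rw [il_odd]; exact hi⟩

lemma il_sum {G : Type*} [AddCommGroup G] (a b : ℕ → G) (M : ℕ) :
    ∑ i ∈ Finset.range M, il a b i =
      ∑ i ∈ Finset.range ((M + 1) / 2), a i + ∑ i ∈ Finset.range (M / 2), b i := by
  induction M with
  | zero => simp
  | succ M ih =>
    rcases Nat.even_or_odd M with hM | hM
    · obtain ⟨k, hk⟩ := hM
      subst hk
      have h1 : (k + k + 1 + 1) / 2 = k + 1 := by omega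
      have h2 : (k + k + 1) / 2 = k := by omega
      have h3 : (k + k) / 2 = k := by omega
      have h4 : il a b (k + k) = a k := by
        have := il_even a b k
        rwa [show 2 * k = k + k by ring] at this
      rw [Finset.sum_range_succ, ih, h1, h2, h3, h4, Finset.sum_range_succ a k]
      abel
    · obtain ⟨k, hk⟩ := hM
      subst hk
      have h1 : (2 * k + 1 + 1 + 1) / 2 = k + 1 := by omega
      have h2 : (2 * k + 1 + 1) / 2 = k + 1 := by omega
      have h3 : (2 * k + 1) / 2 = k := by omega
      rw [Finset.sum_range_succ, ih, h1, h2, h3, il_odd, Finset.sum_range_succ b k]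
      abel

lemma il_series {G : Type*} [AddCommGroup G] [TopologicalSpace G] [ContinuousAdd G]
    (a b : ℕ → G) (sa sb : G) (ha : SeriesConvTo a sa) (hb : SeriesConvTo b sb) :
    SeriesConvTo (il a b) (sa + sb) := by
  have hPa : Tendsto (fun N => ∑ i ∈ Finset.range N, a i) atTop (𝓝 sa) :=
    (tendsto_add_atTop_iff_nat (f := fun N => ∑ i ∈ Finset.range N, a i) 1).mp ha
  have hPb : Tendsto (fun N => ∑ i ∈ Finset.range N, b i) atTop (𝓝 sb) :=
    (tendsto_add_atTop_iff_nat (f := fun N => ∑ i ∈ Finset.range N, b i) 1).mp hb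
  have hg : Tendsto (fun N : ℕ => (N + 1 + 1) / 2) atTop atTop :=
    tendsto_atTop_atTop.mpr fun n => ⟨2 * n, fun m hm => by omega⟩
  have hh : Tendsto (fun N : ℕ => (N + 1) / 2) atTop atTop :=
    tendsto_atTop_atTop.mpr fun n => ⟨2 * n, fun m hm => by omega⟩
  have h := (hPa.comp hg).add (hPb.comp hh)
  have he : (fun N => ∑ i ∈ Finset.range (N + 1), il a b i)
      = fun N => (∑ i ∈ Finset.range ((N + 1 + 1) / 2), a i)
          + ∑ i ∈ Finset.range ((N + 1) / 2), b i :=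
    funext fun N => il_sum a b (N + 1)
  unfold SeriesConvTo
  rw [he]
  exact h

end MBRaux

/-- The measurable subsets form a Boolean ring on which the extended measure is
additive: unions, intersections and differences of measurable sets are
measurable, and the measure is additive on disjoint measurable sets. -/
theorem measurable_boolean_ring {G : Type*} [AddCommGroup G] [UniformSpace G]
    [IsUniformAddGroup G] [CompleteSpace G] [T2Space G] [PartialOrder G]
    {X : Type*}
    (hadd : ∀ a b c : G, a ≤ b → a + c ≤ b + c)
    (hclosed : ∀ (u v : ℕ → G) (lu lv : G), (∀ n, u n ≤ v n) →
      Tendsto u atTop (𝓝 lu) → Tendsto v atTop (𝓝 lv) → lu ≤ lv)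
    (hsqueeze : ∀ (u v w : ℕ → G), (∀ n, u n ≤ v n) → (∀ n, v n ≤ w n) →
      Tendsto u atTop (𝓝 (0 : G)) → Tendsto w atTop (𝓝 (0 : G)) →
      Tendsto v atTop (𝓝 (0 : G)))
    (S : Set (Set X)) (μ : Set X → G)
    (hempty : ∅ ∈ S)
    (hunion : ∀ A B : Set X, A ∈ S → B ∈ S → A ∪ B ∈ S)
    (hinter : ∀ A B : Set X, A ∈ S → B ∈ S → A ∩ B ∈ S)
    (hdiff : ∀ A B : Set X, A ∈ S → B ∈ S → A \ B ∈ S)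
    (hsubcover : ∀ A : Set X, A ∈ S → ∀ C : ℕ → Set X, (∀ i, C i ∈ S) →
      A ⊆ ⋃ i, C i → ∃ F : Finset ℕ, A ⊆ ⋃ i ∈ F, C i)
    (hμadd : ∀ A B : Set X, A ∈ S → B ∈ S → Disjoint A B → μ (A ∪ B) = μ A + μ B)
    (hμpos : ∀ A : Set X, A ∈ S → 0 ≤ μ A)
    (A B : Set X) (hA : RMeasurable S μ A) (hB : RMeasurable S μ B) :
    RMeasurable S μ (A ∪ B) ∧ RMeasurable S μ (A ∩ B) ∧ RMeasurable S μ (A \ B) ∧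
    (∀ LA LB : G, Disjoint A B → RMeasureVal S μ A LA → RMeasureVal S μ B LB →
      RMeasureVal S μ (A ∪ B) (LA + LB)) := by
  haveI : IsOrderedAddMonoid G :=
    { add_le_add_left := fun a b h c => hadd a b c h }
  -- basic facts about μ
  have hμ0 : μ ∅ = 0 := by
    have h := hμadd ∅ ∅ hempty hempty (by simp)
    rw [Set.union_self] at h
    exact (left_eq_add.mp h)
  have hmono : ∀ E F : Set X, E ∈ S → F ∈ S → E ⊆ F → μ E ≤ μ F := by
    intro E F hE hF hEF
    have e : μ F = μ E + μ (F \ E) := by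
      rw [← hμadd _ _ hE (hdiff _ _ hF hE)
        (Set.disjoint_left.mpr fun x hx h => h.2 hx), Set.union_diff_cancel hEF]
    rw [e]
    exact le_add_of_nonneg_right (hμpos _ (hdiff _ _ hF hE))
  have hsubadd : ∀ (F : Finset ℕ) (D : ℕ → Set X), (∀ i, D i ∈ S) → ∀ E, E ∈ S →
      E ⊆ (⋃ i ∈ F, D i) → μ E ≤ ∑ i ∈ F, μ (D i) := by
    intro F
    induction F using Finset.induction_on with
    | empty =>
      intro D hD E hE hsub
      have he : (⋃ i ∈ (∅ : Finset ℕ), D i) = (∅ : Set X) := by simp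
      rw [he] at hsub
      have : E = ∅ := Set.subset_empty_iff.mp hsub
      simp [this, hμ0]
    | @insert j F' hj ih =>
      intro D hD E hE hsub
      rw [Finset.sum_insert hj]
      have hEd : E \ D j ⊆ ⋃ i ∈ F', D i := by
        intro x hx
        obtain ⟨i, hiF, hxi⟩ := Set.mem_iUnion₂.mp (hsub hx.1)
        rcases Finset.mem_insert.mp hiF with rfl | hiF'
        · exact absurd hxi hx.2
        · exact Set.mem_iUnion₂.mpr ⟨i, hiF', hxi⟩
      have e : μ E = μ (E ∩ D j) + μ (E \ D j) := by
        rw [← hμadd _ _ (hinter _ _ hE (hD j)) (hdiff _ _ hE (hD j))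
          (Set.disjoint_left.mpr fun x hx h => h.2 hx.2), Set.inter_union_diff]
      rw [e]
      exact add_le_add
        (hmono _ _ (hinter _ _ hE (hD j)) (hD j) Set.inter_subset_right)
        (ih D hD _ (hdiff _ _ hE (hD j)) hEd)
  have hsum_le_lim : ∀ (x : ℕ → G), (∀ i, 0 ≤ x i) → ∀ s, SeriesConvTo x s →
      ∀ N, ∑ i ∈ Finset.range (N + 1), x i ≤ s := by
    intro x hx s hs N
    refine hclosed (fun _ => ∑ i ∈ Finset.range (N + 1), x i)
      (fun n => ∑ i ∈ Finset.range (n + N + 1), x i) _ s ?_ tendsto_const_nhds ?_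
    · intro n
      exact Finset.sum_le_sum_of_subset_of_nonneg
        (Finset.range_subset_range.mpr (by omega)) (fun i _ _ => hx i)
    · exact (tendsto_add_atTop_iff_nat
        (f := fun n => ∑ i ∈ Finset.range (n + 1), x i) N).mpr hs
  -- generic measurability
  obtain ⟨Am, CA, sA, hAmS, hCAS, hCAc, hAsd, hsA⟩ := hA
  obtain ⟨Bm, CB, sB, hBmS, hCBS, hCBc, hBsd, hsB⟩ := hB
  have key : ∀ op : Set X → Set X → Set X,
      (∀ P Q : Set X, P ∈ S → Q ∈ S → op P Q ∈ S) →
      (∀ P P' Q Q' : Set X,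
        symmDiff (op P Q) (op P' Q') ⊆ symmDiff P P' ∪ symmDiff Q Q') →
      RMeasurable S μ (op A B) := by
    intro op hopS hopsd
    refine ⟨fun m => op (Am m) (Bm m), fun m => MBRaux.il (CA m) (CB m),
      fun m => sA m + sB m,
      fun m => hopS _ _ (hAmS m) (hBmS m),
      fun m => MBRaux.il_mem _ _ S (hCAS m) (hCBS m),
      fun m => ?_, fun m => ?_, ?_⟩
    · have he : (fun i => μ (MBRaux.il (CA m) (CB m) i))
          = MBRaux.il (fun i => μ (CA m i)) (fun i => μ (CB m i)) :=
        funext fun i => by unfold MBRaux.il; rw [apply_ite μ]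
      rw [he]
      exact MBRaux.il_series _ _ _ _ (hCAc m) (hCBc m)
    · exact (hopsd A (Am m) B (Bm m)).trans
        ((Set.union_subset_union (hAsd m) (hBsd m)).trans (MBRaux.il_iUnion _ _))
    · simpa using hsA.add hsB
  refine ⟨key (· ∪ ·) hunion ?_, key (· ∩ ·) hinter ?_, key (· \ ·) hdiff ?_, ?_⟩
  · intro P P' Q Q' x hx
    simp only [Set.mem_symmDiff, Set.mem_union] at hx ⊢
    tauto
  · intro P P' Q Q' x hx
    simp only [Set.mem_symmDiff, Set.mem_union, Set.mem_inter_iff] at hx ⊢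
    tauto
  · intro P P' Q Q' x hx
    simp only [Set.mem_symmDiff, Set.mem_union, Set.mem_diff] at hx ⊢
    tauto
  -- additivity
  clear hAmS hCAS hCAc hAsd hsA hBmS hCBS hCBc hBsd hsB
  intro LA LB hdisj hVA hVB
  obtain ⟨Am, CA, sA, hAmS, hCAS, hCAc, hAsd, hsA, hLA⟩ := hVA
  obtain ⟨Bm, CB, sB, hBmS, hCBS, hCBc, hBsd, hsB, hLB⟩ := hVB
  have hilS : ∀ m i, MBRaux.il (CA m) (CB m) i ∈ S :=
    fun m => MBRaux.il_mem _ _ S (hCAS m) (hCBS m)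
  have hilc : ∀ m, SeriesConvTo (fun i => μ (MBRaux.il (CA m) (CB m) i))
      (sA m + sB m) := by
    intro m
    have he : (fun i => μ (MBRaux.il (CA m) (CB m) i))
        = MBRaux.il (fun i => μ (CA m i)) (fun i => μ (CB m i)) :=
      funext fun i => by unfold MBRaux.il; rw [apply_ite μ]
    rw [he]
    exact MBRaux.il_series _ _ _ _ (hCAc m) (hCBc m)
  have hs0 : Tendsto (fun m => sA m + sB m) atTop (𝓝 (0 : G)) := by
    simpa using hsA.add hsB
  have hIS : ∀ m, Am m ∩ Bm m ∈ S := fun m => hinter _ _ (hAmS m) (hBmS m)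
  have hIsub : ∀ m, Am m ∩ Bm m ⊆ ⋃ i, MBRaux.il (CA m) (CB m) i := by
    intro m x hx
    apply MBRaux.il_iUnion (CA m) (CB m)
    by_cases hxA : x ∈ A
    · have hxB : x ∉ B := Set.disjoint_left.mp hdisj hxA
      exact Or.inr (hBsd m (Set.mem_symmDiff.mpr (Or.inr ⟨hx.2, hxB⟩)))
    · exact Or.inl (hAsd m (Set.mem_symmDiff.mpr (Or.inr ⟨hx.1, hxA⟩)))
  have hbound : ∀ m, μ (Am m ∩ Bm m) ≤ sA m + sB m := by
    intro m
    obtain ⟨F, hF⟩ := hsubcover _ (hIS m) _ (hilS m) (hIsub m)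
    have hx : ∀ i, 0 ≤ μ (MBRaux.il (CA m) (CB m) i) := fun i => hμpos _ (hilS m i)
    have h1 : μ (Am m ∩ Bm m) ≤ ∑ i ∈ F, μ (MBRaux.il (CA m) (CB m) i) :=
      hsubadd F _ (hilS m) _ (hIS m) hF
    have h2 : ∑ i ∈ F, μ (MBRaux.il (CA m) (CB m) i)
        ≤ ∑ i ∈ Finset.range (F.sup id + 1), μ (MBRaux.il (CA m) (CB m) i) :=
      Finset.sum_le_sum_of_subset_of_nonneg
        (fun i hi => Finset.mem_range.mpr (Nat.lt_succ_of_le (Finset.le_sup (f := id) hi)))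
        (fun i _ _ => hx i)
    exact h1.trans (h2.trans (hsum_le_lim _ hx _ (hilc m) (F.sup id)))
  have hz : Tendsto (fun m => μ (Am m ∩ Bm m)) atTop (𝓝 (0 : G)) :=
    hsqueeze (fun _ => 0) _ (fun m => sA m + sB m)
      (fun m => hμpos _ (hIS m)) hbound tendsto_const_nhds hs0
  have hdecomp : ∀ m, μ (Am m ∪ Bm m) = μ (Am m) + μ (Bm m) - μ (Am m ∩ Bm m) := by
    intro m
    have e1 : μ (Am m ∪ Bm m) = μ (Am m) + μ (Bm m \ Am m) := by
      rw [← hμadd _ _ (hAmS m) (hdiff _ _ (hBmS m) (hAmS m))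
        (Set.disjoint_left.mpr fun x hx h => h.2 hx), Set.union_diff_self]
    have e2 : μ (Bm m) = μ (Bm m ∩ Am m) + μ (Bm m \ Am m) := by
      rw [← hμadd _ _ (hinter _ _ (hBmS m) (hAmS m)) (hdiff _ _ (hBmS m) (hAmS m))
        (Set.disjoint_left.mpr fun x hx h => h.2 hx.2), Set.inter_union_diff]
    rw [e1, Set.inter_comm, e2]
    abel
  refine ⟨fun m => Am m ∪ Bm m, fun m => MBRaux.il (CA m) (CB m),
    fun m => sA m + sB m,
    fun m => hunion _ _ (hAmS m) (hBmS m), hilS, hilc, fun m => ?_, hs0, ?_⟩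
  · have hsd : symmDiff (A ∪ B) (Am m ∪ Bm m) ⊆ symmDiff A (Am m) ∪ symmDiff B (Bm m) := by
      intro x hx
      simp only [Set.mem_symmDiff, Set.mem_union] at hx ⊢
      tauto
    exact hsd.trans
      ((Set.union_subset_union (hAsd m) (hBsd m)).trans (MBRaux.il_iUnion _ _))
  · have he : (fun m => μ (Am m ∪ Bm m))
        = fun m => μ (Am m) + μ (Bm m) - μ (Am m ∩ Bm m) := funext hdecomp
    rw [he]
    simpa using (hLA.add hLB).sub hz
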